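/- If (x₀(t),p₀(t)), (x₁(t),p₁(t)), (x₂(t),p₂(t)) are three solutions of the system dx/dt = 1/√(-p) - a₀(t) - a₁(t)x - a₂(t)x², dp/dt = p(a₁(t)+2a₂(t)x), with all pᵢ(t) < 0, then t ↦ (x₁-x₂)√(p₁p₂) + (x₂-x₀)√(p₂p₀) + (x₀-x₁)√(p₀p₁) is constant. -/

import Mathlib

/-- along any three solutions of the Hamiltonian system
`dx/dt = 1/√(-p) - a₀(t) - a₁(t)x - a₂(t)x²`, `dp/dt = p(a₁(t)+2a₂(t)x)`
with `pᵢ(t) < 0`, the function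
`(x₁-x₂)√(p₁p₂) + (x₂-x₀)√(p₂p₀) + (x₀-x₁)√(p₀p₁)` is constant in `t`. -/
theorem first_integral_along_solutions (a₀ a₁ a₂ : ℝ → ℝ)
    (ha₀ : Continuous a₀) (ha₁ : Continuous a₁) (ha₂ : Continuous a₂)
    (x : Fin 3 → ℝ → ℝ) (p : Fin 3 → ℝ → ℝ)
    (hneg : ∀ i t, p i t < 0)
    (hx : ∀ i t, HasDerivAt (x i)
      (1 / Real.sqrt (-(p i t)) - a₀ t - a₁ t * x i t - a₂ t * (x i t) ^ 2) t)
    (hp : ∀ i t, HasDerivAt (p i) (p i t * (a₁ t + 2 * a₂ t * x i t)) t) :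
    ∀ s t : ℝ,
      (x 1 s - x 2 s) * (Real.sqrt (-(p 1 s)) * Real.sqrt (-(p 2 s))) +
      (x 2 s - x 0 s) * (Real.sqrt (-(p 2 s)) * Real.sqrt (-(p 0 s))) +
      (x 0 s - x 1 s) * (Real.sqrt (-(p 0 s)) * Real.sqrt (-(p 1 s))) =
      (x 1 t - x 2 t) * (Real.sqrt (-(p 1 t)) * Real.sqrt (-(p 2 t))) +
      (x 2 t - x 0 t) * (Real.sqrt (-(p 2 t)) * Real.sqrt (-(p 0 t))) +
      (x 0 t - x 1 t) * (Real.sqrt (-(p 0 t)) * Real.sqrt (-(p 1 t))) := by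
  set q : Fin 3 → ℝ → ℝ := fun i t => Real.sqrt (-(p i t)) with hqdef
  have hqpos : ∀ i t, 0 < q i t := fun i t =>
    Real.sqrt_pos.2 (neg_pos.2 (hneg i t))
  have hqsq : ∀ i t, q i t * q i t = -(p i t) := fun i t =>
    Real.mul_self_sqrt (le_of_lt (neg_pos.2 (hneg i t)))
  have hq : ∀ i t, HasDerivAt (q i)
      (q i t * (a₁ t + 2 * a₂ t * x i t) / 2) t := by
    intro i t
    have h1 := (Real.hasDerivAt_sqrt (ne_of_gt (neg_pos.2 (hneg i t)))).comp t
      ((hp i t).neg)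
    convert h1 using 1
    iterate 3 rfl
    have hs := hqsq i t
    have hne : q i t ≠ 0 := ne_of_gt (hqpos i t)
    have hr : Real.sqrt (-(p i t)) = q i t := rfl
    rw [hr]
    field_simp
    linear_combination (a₁ t + 2 * a₂ t * x i t) * hs
  have key : ∀ t, HasDerivAt (fun t =>
      (x 1 t - x 2 t) * (q 1 t * q 2 t) +
      (x 2 t - x 0 t) * (q 2 t * q 0 t) +
      (x 0 t - x 1 t) * (q 0 t * q 1 t)) 0 t := by
    intro t
    have H := ((((hx 1 t).sub (hx 2 t)).mul ((hq 1 t).mul (hq 2 t))).add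
        (((hx 2 t).sub (hx 0 t)).mul ((hq 2 t).mul (hq 0 t)))).add
        (((hx 0 t).sub (hx 1 t)).mul ((hq 0 t).mul (hq 1 t)))
    convert H using 1
    iterate 3 rfl
    have h0 := (hqpos 0 t).ne'
    have h1 := (hqpos 1 t).ne'
    have h2 := (hqpos 2 t).ne'
    have hr : ∀ i, Real.sqrt (-(p i t)) = q i t := fun i => rfl
    simp only [hr, Pi.mul_apply, Pi.sub_apply]
    field_simp
    ring
  intro s t
  have hdiff : Differentiable ℝ (fun t =>
      (x 1 t - x 2 t) * (q 1 t * q 2 t) +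
      (x 2 t - x 0 t) * (q 2 t * q 0 t) +
      (x 0 t - x 1 t) * (q 0 t * q 1 t)) := fun u => (key u).differentiableAt
  exact is_const_of_deriv_eq_zero hdiff (fun u => (key u).deriv) s t
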